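/- Let λ = z + 1/z with z ∈ D, δ ≤ |z| < 1 for some fixed 0 < δ < 1. Then |1±z|² ≍ |λ±2| and 1−|z| ≍ dist(λ,[−2,2])/|λ²−4|^{1/2}, with implied constants depending only on δ. -/

import Mathlib

open Complex Metric

/-- The segment `[−2,2]` viewed as a subset of `ℂ`. -/
def segTwo : Set ℂ := (fun x : ℝ => (x : ℂ)) '' Set.Icc (-2 : ℝ) 2

lemma mem_segTwo {t : ℝ} (h1 : -2 ≤ t) (h2 : t ≤ 2) : (t : ℂ) ∈ segTwo :=
  ⟨t, ⟨h1, h2⟩, rfl⟩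

lemma segTwo_nonempty : segTwo.Nonempty :=
  ⟨((0 : ℝ) : ℂ), mem_segTwo (by norm_num) (by norm_num)⟩

lemma le_infDist_segTwo {w : ℂ} {b : ℝ} (h : ∀ t : ℝ, -2 ≤ t → t ≤ 2 → b ≤ ‖w - t‖) :
    b ≤ infDist w segTwo := by
  by_contra hlt
  push_neg at hlt
  obtain ⟨y, hy, hd⟩ := (Metric.infDist_lt_iff segTwo_nonempty).1 hlt
  obtain ⟨t, ht, rfl⟩ := hy
  rw [Complex.dist_eq] at hd
  exact absurd (h t ht.1 ht.2) (not_le.2 hd)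

lemma im_le_infDist_segTwo (w : ℂ) : |w.im| ≤ infDist w segTwo := by
  apply le_infDist_segTwo
  intro t _ _
  calc |w.im| = |(w - (t : ℂ)).im| := by simp
    _ ≤ ‖w - t‖ := Complex.abs_im_le_norm _

lemma infDist_segTwo_mid {w : ℂ} (h : |w.re| ≤ 2) : infDist w segTwo = |w.im| := by
  refine le_antisymm ?_ (im_le_infDist_segTwo w)
  have hm : ((w.re : ℝ) : ℂ) ∈ segTwo := mem_segTwo (abs_le.1 h).1 (abs_le.1 h).2
  calc infDist w segTwo ≤ dist w (w.re : ℂ) := infDist_le_dist_of_mem hm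
    _ = |w.im| := by
        rw [Complex.dist_eq]
        have hw : w - (w.re : ℂ) = (w.im : ℂ) * Complex.I := by
          apply Complex.ext <;> simp
        rw [hw]
        simp

lemma infDist_segTwo_right {w : ℂ} (h : 2 ≤ w.re) :
    infDist w segTwo = ‖w - 2‖ := by
  refine le_antisymm ?_ ?_
  · have hm : ((2 : ℝ) : ℂ) ∈ segTwo := mem_segTwo (by norm_num) le_rfl
    have h2 := infDist_le_dist_of_mem (x := w) hm
    rw [Complex.dist_eq] at h2
    simpa using h2
  · apply le_infDist_segTwo
    intro t ht1 ht2
    have hsq : ‖w - 2‖ ^ 2 ≤ ‖w - t‖ ^ 2 := by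
      rw [Complex.sq_norm, Complex.sq_norm, Complex.normSq_apply, Complex.normSq_apply]
      simp only [Complex.sub_re, Complex.sub_im, Complex.ofReal_re, Complex.ofReal_im]
      have h2re : (2 : ℂ).re = 2 := by norm_num
      have h2im : (2 : ℂ).im = 0 := by norm_num
      rw [h2re, h2im]
      nlinarith [h]
    nlinarith [norm_nonneg (w - 2), norm_nonneg (w - t)]

lemma infDist_segTwo_left {w : ℂ} (h : w.re ≤ -2) :
    infDist w segTwo = ‖w + 2‖ := by
  refine le_antisymm ?_ ?_
  · have hm : ((-2 : ℝ) : ℂ) ∈ segTwo := mem_segTwo le_rfl (by norm_num)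
    have h2 := infDist_le_dist_of_mem (x := w) hm
    rw [Complex.dist_eq] at h2
    have he : w - ((-2 : ℝ) : ℂ) = w + 2 := by push_cast; ring
    rwa [he] at h2
  · apply le_infDist_segTwo
    intro t ht1 ht2
    have hsq : ‖w + 2‖ ^ 2 ≤ ‖w - t‖ ^ 2 := by
      rw [Complex.sq_norm, Complex.sq_norm, Complex.normSq_apply, Complex.normSq_apply]
      simp only [Complex.sub_re, Complex.sub_im, Complex.add_re, Complex.add_im,
        Complex.ofReal_re, Complex.ofReal_im]
      have h2re : (2 : ℂ).re = 2 := by norm_num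
      have h2im : (2 : ℂ).im = 0 := by norm_num
      rw [h2re, h2im]
      nlinarith [h]
    nlinarith [norm_nonneg (w + 2), norm_nonneg (w - t)]

/-- From `x² ≤ y²` and `0 ≤ y` conclude `x ≤ y`. -/
lemma le_of_sq_le_sq'' {x y : ℝ} (h : x ^ 2 ≤ y ^ 2) (hy : 0 ≤ y) : x ≤ y := by
  nlinarith [sq_nonneg (x - y), sq_nonneg (x + y)]

set_option maxHeartbeats 2000000 in
/-- Lower bound `δ²|b| ≤ r·A·B` (valid for all `z` in the annulus). -/
lemma joukowski_ABlow {δ r a b A B : ℝ} (hδ0 : 0 < δ) (hδ1 : δ < 1) (hδr : δ ≤ r) (hr1 : r < 1)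
    (habs : a ^ 2 + b ^ 2 = r ^ 2) (hA2 : A ^ 2 = (1 - a) ^ 2 + b ^ 2)
    (hB2 : B ^ 2 = (1 + a) ^ 2 + b ^ 2) (hA0 : 0 ≤ A) (hB0 : 0 ≤ B) :
    δ ^ 2 * |b| ≤ r * (A * B) := by
  have hr0 : 0 < r := lt_of_lt_of_le hδ0 hδr
  have hM2 : (A * B) ^ 2 = (1 - a ^ 2 + b ^ 2) ^ 2 + 4 * a ^ 2 * b ^ 2 := by
    have h : (A * B) ^ 2 = A ^ 2 * B ^ 2 := by ring
    rw [h, hA2, hB2]; ring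
  have hAB0 : 0 ≤ A * B := mul_nonneg hA0 hB0
  have hbr : |b| ≤ r := by nlinarith [_root_.sq_abs b, abs_nonneg b]
  rcases le_or_gt (r / 2) (|a|) with hac | hac
  · have h1 : 2 * |a| * |b| ≤ A * B := by
      apply le_of_sq_le_sq'' _ hAB0
      nlinarith [_root_.sq_abs a, _root_.sq_abs b, sq_nonneg (1 - a ^ 2 + b ^ 2)]
    have h2 : 0 ≤ r * |b| * (2 * |a| - r) :=
      mul_nonneg (mul_nonneg hr0.le (abs_nonneg b)) (by linarith)
    have h3 : 0 ≤ |b| * (r ^ 2 - δ ^ 2) :=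
      mul_nonneg (abs_nonneg b) (by nlinarith : (0:ℝ) ≤ r ^ 2 - δ ^ 2)
    have h4 : 0 ≤ r * (A * B - 2 * |a| * |b|) :=
      mul_nonneg hr0.le (by linarith : (0:ℝ) ≤ A * B - 2 * |a| * |b|)
    nlinarith [h2, h3, h4]
  · have hba : a ^ 2 ≤ b ^ 2 := by nlinarith [_root_.sq_abs a, abs_nonneg a]
    have h1 : 1 - a ^ 2 + b ^ 2 ≤ A * B := by
      apply le_of_sq_le_sq'' _ hAB0
      nlinarith [sq_nonneg (a * b)]
    have h2 : (1 : ℝ) ≤ A * B := by nlinarith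
    have h3 : 0 ≤ |b| * (1 - δ ^ 2) :=
      mul_nonneg (abs_nonneg b) (by nlinarith : (0:ℝ) ≤ 1 - δ ^ 2)
    have h4 : 0 ≤ r * (A * B - 1) :=
      mul_nonneg hr0.le (by linarith : (0:ℝ) ≤ A * B - 1)
    nlinarith [h3, h4]

set_option maxHeartbeats 2000000 in
/-- Upper bound `r·A·B ≤ 4|b|`, valid when `|Re λ| ≤ 2`. -/
lemma joukowski_ABhigh {δ r a b A B : ℝ} (hδ0 : 0 < δ) (hδ1 : δ < 1) (hδr : δ ≤ r) (hr1 : r < 1)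
    (habs : a ^ 2 + b ^ 2 = r ^ 2) (hA2 : A ^ 2 = (1 - a) ^ 2 + b ^ 2)
    (hB2 : B ^ 2 = (1 + a) ^ 2 + b ^ 2) (hA0 : 0 ≤ A) (hB0 : 0 ≤ B)
    (hcond : |a| * (r ^ 2 + 1) ≤ 2 * r ^ 2) :
    r * (A * B) ≤ 4 * |b| := by
  have hr0 : 0 < r := lt_of_lt_of_le hδ0 hδr
  have hM2 : (A * B) ^ 2 = (1 - a ^ 2 + b ^ 2) ^ 2 + 4 * a ^ 2 * b ^ 2 := by
    have h : (A * B) ^ 2 = A ^ 2 * B ^ 2 := by ring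
    rw [h, hA2, hB2]; ring
  have hAB0 : 0 ≤ A * B := mul_nonneg hA0 hB0
  have hbr : |b| ≤ r := by nlinarith [_root_.sq_abs b, abs_nonneg b]
  have hblow : r * (1 - r ^ 2) ≤ (r ^ 2 + 1) * |b| := by
    apply le_of_sq_le_sq'' _ (mul_nonneg (by positivity) (abs_nonneg b))
    have hsq := mul_self_le_mul_self
      (mul_nonneg (abs_nonneg a) (by positivity : (0:ℝ) ≤ r ^ 2 + 1)) hcond
    nlinarith [_root_.sq_abs a, _root_.sq_abs b]
  have hr2 : r ^ 2 < 1 := by nlinarith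
  have hrb : r * |b| < 1 := by
    have := mul_le_mul_of_nonneg_left hbr hr0.le
    nlinarith
  have htri : r * (A * B) ≤ 2 * |b| + r * (1 - r ^ 2) := by
    apply le_of_sq_le_sq''
    · have h1 : 0 ≤ |b| * (1 - r * |b|) :=
        mul_nonneg (abs_nonneg b) (by linarith : (0:ℝ) ≤ 1 - r * |b|)
      have h2 : 0 ≤ b ^ 2 * (1 - r ^ 4) := by
        have h4 : r ^ 4 < 1 := by nlinarith [sq_nonneg (r ^ 2)]
        exact mul_nonneg (sq_nonneg b) (by linarith)
      have h3 : 0 ≤ (r * (1 - r ^ 2)) * (|b| * (1 - r * |b|)) :=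
        mul_nonneg (mul_nonneg hr0.le (by linarith : (0:ℝ) ≤ 1 - r ^ 2)) h1
      have hclean : (r * (A * B)) ^ 2
          = (r * (1 - r ^ 2) + 2 * r * b ^ 2) ^ 2 + 4 * r ^ 2 * (r ^ 2 - b ^ 2) * b ^ 2 := by
        have he : (r * (A * B)) ^ 2 = r ^ 2 * (A * B) ^ 2 := by ring
        have ha2 : a ^ 2 = r ^ 2 - b ^ 2 := by linarith
        rw [he, hM2, ha2]; ring
      nlinarith [hclean, h2, h3, _root_.sq_abs b]
    · have hh : 0 ≤ r * (1 - r ^ 2) :=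
        mul_nonneg hr0.le (by linarith : (0:ℝ) ≤ 1 - r ^ 2)
      positivity
  nlinarith [hblow, htri, mul_nonneg (abs_nonneg b) (by linarith : (0:ℝ) ≤ 1 - r ^ 2)]

set_option maxHeartbeats 2000000 in
/-- Key bounds, middle case. -/
lemma joukowski_key_mid {δ r a b A B d : ℝ} (hδ0 : 0 < δ) (hδ1 : δ < 1) (hδr : δ ≤ r)
    (hr1 : r < 1) (habs : a ^ 2 + b ^ 2 = r ^ 2) (hA2 : A ^ 2 = (1 - a) ^ 2 + b ^ 2)
    (hB2 : B ^ 2 = (1 + a) ^ 2 + b ^ 2) (hA0 : 0 ≤ A) (hB0 : 0 ≤ B)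
    (hcond : |a| * (r ^ 2 + 1) ≤ 2 * r ^ 2) (hdval : d * r ^ 2 = |b| * (1 - r ^ 2)) :
    δ ^ 2 / 2 * (d * r) ≤ (1 - r) * (A * B) ∧ (1 - r) * (A * B) ≤ 4 * (d * r) := by
  have hr0 : 0 < r := lt_of_lt_of_le hδ0 hδr
  have hABlow := joukowski_ABlow hδ0 hδ1 hδr hr1 habs hA2 hB2 hA0 hB0
  have hABhigh := joukowski_ABhigh hδ0 hδ1 hδr hr1 habs hA2 hB2 hA0 hB0 hcond
  have hr1' : (0:ℝ) ≤ 1 - r := by linarith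
  constructor
  · apply le_of_mul_le_mul_right _ hr0
    have e : δ ^ 2 / 2 * (d * r) * r = δ ^ 2 / 2 * (|b| * (1 - r ^ 2)) := by
      rw [← hdval]; ring
    rw [e]
    have h1 : (1 - r) * (δ ^ 2 * |b|) ≤ (1 - r) * (r * (A * B)) :=
      mul_le_mul_of_nonneg_left hABlow hr1'
    have h2 : 0 ≤ δ ^ 2 * |b| * (1 - r) ^ 2 := by positivity
    nlinarith [h1, h2]
  · apply le_of_mul_le_mul_right _ hr0
    have e : 4 * (d * r) * r = 4 * (|b| * (1 - r ^ 2)) := by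
      rw [← hdval]; ring
    rw [e]
    have h1 : (1 - r) * (r * (A * B)) ≤ (1 - r) * (4 * |b|) :=
      mul_le_mul_of_nonneg_left hABhigh hr1'
    have h2 : 0 ≤ |b| * (r * (1 - r)) := by positivity
    nlinarith [h1, h2]

set_option maxHeartbeats 2000000 in
/-- Key bounds, endpoint case (`Re λ > 2` after the symmetry `a ↦ -a`). -/
lemma joukowski_key_end {δ r a b A B d : ℝ} (hδ0 : 0 < δ) (hδ1 : δ < 1) (hδr : δ ≤ r)
    (hr1 : r < 1) (habs : a ^ 2 + b ^ 2 = r ^ 2) (hA2 : A ^ 2 = (1 - a) ^ 2 + b ^ 2)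
    (hB2 : B ^ 2 = (1 + a) ^ 2 + b ^ 2) (hA0 : 0 ≤ A) (hB0 : 0 ≤ B)
    (hcond : 2 * r ^ 2 < a * (r ^ 2 + 1)) (hdval : d * r = A ^ 2) :
    δ ^ 2 / 2 * (d * r) ≤ (1 - r) * (A * B) ∧ (1 - r) * (A * B) ≤ 4 * (d * r) := by
  have hr0 : 0 < r := lt_of_lt_of_le hδ0 hδr
  have hapos : 0 < a := by nlinarith
  have haR : a ≤ r := by nlinarith [sq_nonneg (a - r), sq_nonneg b]
  have hAsm : A ≤ 1 - r ^ 2 := by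
    apply le_of_sq_le_sq'' _ (by nlinarith)
    nlinarith [sq_nonneg A]
  have hBbig : (1 : ℝ) ≤ B := by nlinarith
  have hA1 : 1 - r ≤ A := by
    apply le_of_sq_le_sq''  -- (1-r)² ≤ A² ; need 0 ≤ A
    · nlinarith
    · exact hA0
  have hBle : B ≤ 2 := by
    apply le_of_sq_le_sq'' _ (by norm_num)
    nlinarith
  have hδsq : δ ^ 2 ≤ 1 := by nlinarith
  constructor
  · rw [hdval]
    have h1 : A * A ≤ (1 - r ^ 2) * A := mul_le_mul_of_nonneg_right hAsm hA0
    have h2 : (1 - r) * A ≤ (1 - r) * (A * B) :=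
      mul_le_mul_of_nonneg_left (le_mul_of_one_le_right hA0 hBbig)
        (by linarith : (0:ℝ) ≤ 1 - r)
    have h3 : 0 ≤ A * (1 - r) := mul_nonneg hA0 (by linarith)
    nlinarith [h1, h2, h3, hδsq, sq_nonneg δ,
      mul_nonneg (mul_nonneg (sq_nonneg δ) hA0) (sq_nonneg (1 - r))]
  · rw [hdval]
    have h1 : (1 - r) * (A * B) ≤ (1 - r) * (A * 2) :=
      mul_le_mul_of_nonneg_left (mul_le_mul_of_nonneg_left hBle hA0)
        (by linarith : (0:ℝ) ≤ 1 - r)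
    have h2 : (1 - r) * A ≤ A * A := mul_le_mul_of_nonneg_right hA1 hA0
    nlinarith [h1, h2, sq_nonneg A]

set_option maxHeartbeats 1000000 in
/-- Lemma 3, remaining relations: under the Joukowski map `λ = z + 1/z` with
`δ ≤ |z| < 1`, one has `|1±z|² ≍ |λ±2|` and `1−|z| ≍ dist(λ,[−2,2])/|λ²−4|^{1/2}`,
with constants depending only on `δ`. -/
theorem joukowski_endpoint_comparisons (δ : ℝ) (hδ0 : 0 < δ) (hδ1 : δ < 1) :
    ∃ c C : ℝ, 0 < c ∧ 0 < C ∧ ∀ z : ℂ, δ ≤ ‖z‖ → ‖z‖ < 1 →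
      (c * ‖z + 1 / z + 2‖ ≤ ‖1 + z‖ ^ 2 ∧
        ‖1 + z‖ ^ 2 ≤ C * ‖z + 1 / z + 2‖) ∧
      (c * ‖z + 1 / z - 2‖ ≤ ‖1 - z‖ ^ 2 ∧
        ‖1 - z‖ ^ 2 ≤ C * ‖z + 1 / z - 2‖) ∧
      (c * (Metric.infDist (z + 1 / z) segTwo /
          Real.sqrt (‖(z + 1 / z) ^ 2 - 4‖)) ≤ 1 - ‖z‖ ∧
        1 - ‖z‖ ≤ C * (Metric.infDist (z + 1 / z) segTwo /
          Real.sqrt (‖(z + 1 / z) ^ 2 - 4‖))) := by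
  refine ⟨δ ^ 2 / 2, 4, by positivity, by norm_num, ?_⟩
  intro z hδz hz1
  have hr0' : 0 < ‖z‖ := lt_of_lt_of_le hδ0 hδz
  have hz0 : z ≠ 0 := norm_pos_iff.mp hr0'
  set r : ℝ := ‖z‖ with hr
  have hr0 : 0 < r := hr0'
  have hr1 : r < 1 := hz1
  have hδ2 : δ ^ 2 / 2 ≤ r := by nlinarith [hδ0, hδ1, hδz]
  have hr2le : r ^ 2 ≤ 1 := by nlinarith [hr0, hr1]
  set a : ℝ := z.re with ha
  set b : ℝ := z.im with hb
  have habs : a ^ 2 + b ^ 2 = r ^ 2 := by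
    rw [hr, Complex.sq_norm, Complex.normSq_apply]; ring
  set A : ℝ := ‖1 - z‖ with hA
  set B : ℝ := ‖1 + z‖ with hB
  have hA2 : A ^ 2 = (1 - a) ^ 2 + b ^ 2 := by
    rw [hA, Complex.sq_norm, Complex.normSq_apply]
    simp [ha, hb]
    ring
  have hB2 : B ^ 2 = (1 + a) ^ 2 + b ^ 2 := by
    rw [hB, Complex.sq_norm, Complex.normSq_apply]
    simp [ha, hb]
    ring
  have hA0' : (0:ℝ) ≤ A := norm_nonneg _
  have hB0' : (0:ℝ) ≤ B := norm_nonneg _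
  have hA1 : 1 - r ≤ A := by
    have h := norm_sub_norm_le 1 z
    simpa [hr, hA] using h
  have hB1 : 1 - r ≤ B := by
    have h := norm_sub_norm_le 1 (-z)
    simpa [hr, hB, sub_neg_eq_add] using h
  have hA0 : 0 < A := lt_of_lt_of_le (by linarith) hA1
  have hB0 : 0 < B := lt_of_lt_of_le (by linarith) hB1
  -- key complex identities
  have e1 : ‖z + 1 / z + 2‖ * r = B ^ 2 := by
    have hid : (z + 1 / z + 2) * z = (1 + z) ^ 2 := by field_simp; ring
    have h := congrArg norm hid
    rw [norm_mul, norm_pow] at h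
    rw [hr, hB]; exact h
  have e2 : ‖z + 1 / z - 2‖ * r = A ^ 2 := by
    have hid : (z + 1 / z - 2) * z = (1 - z) ^ 2 := by field_simp; ring
    have h := congrArg norm hid
    rw [norm_mul, norm_pow] at h
    rw [hr, hA]; exact h
  have habs1_nonneg : (0:ℝ) ≤ ‖z + 1 / z + 2‖ := norm_nonneg _
  have habs2_nonneg : (0:ℝ) ≤ ‖z + 1 / z - 2‖ := norm_nonneg _
  constructor
  · constructor
    · calc δ ^ 2 / 2 * ‖z + 1 / z + 2‖
          ≤ r * ‖z + 1 / z + 2‖ :=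
            mul_le_mul_of_nonneg_right hδ2 habs1_nonneg
        _ = B ^ 2 := by rw [mul_comm]; exact e1
    · calc B ^ 2 = ‖z + 1 / z + 2‖ * r := e1.symm
        _ ≤ ‖z + 1 / z + 2‖ * 1 :=
            mul_le_mul_of_nonneg_left hr1.le habs1_nonneg
        _ ≤ 4 * ‖z + 1 / z + 2‖ := by linarith
  constructor
  · constructor
    · calc δ ^ 2 / 2 * ‖z + 1 / z - 2‖
          ≤ r * ‖z + 1 / z - 2‖ :=
            mul_le_mul_of_nonneg_right hδ2 habs2_nonneg
        _ = A ^ 2 := by rw [mul_comm]; exact e2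
    · calc A ^ 2 = ‖z + 1 / z - 2‖ * r := e2.symm
        _ ≤ ‖z + 1 / z - 2‖ * 1 :=
            mul_le_mul_of_nonneg_left hr1.le habs2_nonneg
        _ ≤ 4 * ‖z + 1 / z - 2‖ := by linarith
  -- third part
  have hS : Real.sqrt (‖(z + 1 / z) ^ 2 - 4‖) = A * B / r := by
    have hid : ((z + 1 / z) ^ 2 - 4) * z ^ 2 = ((1 - z) * (1 + z)) ^ 2 := by
      field_simp; ring
    have h1 := congrArg norm hid
    rw [norm_mul, norm_pow, norm_pow, norm_mul] at h1
    have h2 : ‖(z + 1 / z) ^ 2 - 4‖ = (A * B / r) ^ 2 := by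
      rw [hA, hB, hr]
      rw [div_pow]
      rw [eq_div_iff (by positivity)]
      rw [← hr] at h1 ⊢
      calc ‖(z + 1 / z) ^ 2 - 4‖ * r ^ 2
          = (‖1 - z‖ * ‖1 + z‖) ^ 2 := h1
        _ = (‖1 - z‖ * ‖1 + z‖) ^ 2 := rfl
    rw [h2, Real.sqrt_sq (by positivity)]
  set d : ℝ := infDist (z + 1 / z) segTwo with hd
  have hd0 : 0 ≤ d := infDist_nonneg
  have hnsq : Complex.normSq z = r ^ 2 := by rw [hr, ← Complex.sq_norm]
  have hx : (z + 1 / z).re = a + a / r ^ 2 := by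
    rw [Complex.add_re, one_div, Complex.inv_re, hnsq]
  have hy : (z + 1 / z).im = b - b / r ^ 2 := by
    rw [Complex.add_im, one_div, Complex.inv_im, hnsq]; ring
  have key : δ ^ 2 / 2 * (d * r) ≤ (1 - r) * (A * B) ∧ (1 - r) * (A * B) ≤ 4 * (d * r) := by
    rcases le_or_gt (|(z + 1 / z).re|) 2 with hmid | hout
    · have hdim : d = |(z + 1 / z).im| := infDist_segTwo_mid hmid
      have hdval : d * r ^ 2 = |b| * (1 - r ^ 2) := by
        have h1 : b / r ^ 2 - b = b * ((1 - r ^ 2) / r ^ 2) := by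
          field_simp
        have hnn : (0:ℝ) ≤ (1 - r ^ 2) / r ^ 2 :=
          div_nonneg (by linarith) (by positivity)
        have him : |b - b / r ^ 2| = |b| * ((1 - r ^ 2) / r ^ 2) := by
          rw [abs_sub_comm, h1, abs_mul, _root_.abs_of_nonneg hnn]
        rw [hdim, hy, him]
        field_simp
      have hcond : |a| * (r ^ 2 + 1) ≤ 2 * r ^ 2 := by
        rw [hx] at hmid
        have h1 := (abs_le.1 hmid).1
        have h2 := (abs_le.1 hmid).2
        rcases le_or_gt 0 a with hha | hha
        · rw [_root_.abs_of_nonneg hha]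
          have h3 := mul_le_mul_of_nonneg_right h2 (by positivity : (0:ℝ) ≤ r ^ 2)
          have he : (a + a / r ^ 2) * r ^ 2 = a * r ^ 2 + a := by field_simp
          rw [he] at h3; linarith
        · rw [_root_.abs_of_neg hha]
          have h3 := mul_le_mul_of_nonneg_right h1 (by positivity : (0:ℝ) ≤ r ^ 2)
          have he : (a + a / r ^ 2) * r ^ 2 = a * r ^ 2 + a := by field_simp
          rw [he] at h3; linarith
      exact joukowski_key_mid hδ0 hδ1 hδz hr1 habs hA2 hB2 hA0' hB0' hcond hdval
    · rcases lt_abs.1 hout with hgt | hlt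
      · have hdval : d * r = A ^ 2 := by
          rw [hd, infDist_segTwo_right hgt.le, ← e2]
        have hcond : 2 * r ^ 2 < a * (r ^ 2 + 1) := by
          rw [hx] at hgt
          have h3 := mul_lt_mul_of_pos_right hgt (by positivity : (0:ℝ) < r ^ 2)
          have he : (a + a / r ^ 2) * r ^ 2 = a * r ^ 2 + a := by field_simp
          rw [he] at h3; linarith
        exact joukowski_key_end hδ0 hδ1 hδz hr1 habs hA2 hB2 hA0' hB0' hcond hdval
      · have hre : (z + 1 / z).re ≤ -2 := by linarith
        have hdval : d * r = B ^ 2 := by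
          have heq : infDist (z + 1 / z) segTwo = ‖z + 1 / z + 2‖ :=
            infDist_segTwo_left hre
          rw [hd, heq, ← e1]
        have hcond : 2 * r ^ 2 < (-a) * (r ^ 2 + 1) := by
          rw [hx] at hlt
          have hlt' : a + a / r ^ 2 < -2 := by linarith
          have h3 := mul_lt_mul_of_pos_right hlt' (by positivity : (0:ℝ) < r ^ 2)
          have he : (a + a / r ^ 2) * r ^ 2 = a * r ^ 2 + a := by field_simp
          rw [he] at h3; linarith
        have habs' : (-a) ^ 2 + b ^ 2 = r ^ 2 := by linear_combination habs
        have hB2' : B ^ 2 = (1 - (-a)) ^ 2 + b ^ 2 := by rw [hB2]; ring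
        have hA2' : A ^ 2 = (1 + (-a)) ^ 2 + b ^ 2 := by rw [hA2]; ring
        have h := joukowski_key_end hδ0 hδ1 hδz hr1 habs' hB2' hA2' hB0' hA0' hcond hdval
        constructor
        · have h5 := h.1; linarith [h5]
        · have h5 := h.2; linarith [h5]
  rw [hS]
  have hdivS : d / (A * B / r) = d * r / (A * B) := by
    rw [div_div_eq_mul_div]
  have hABpos : 0 < A * B := by positivity
  constructor
  · rw [hdivS, ← mul_div_assoc, div_le_iff₀ hABpos]
    exact key.1
  · rw [hdivS, ← mul_div_assoc, le_div_iff₀ hABpos]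
    exact key.2
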